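/- Let m ≥ 1 and suppose A = A⁰ ⊕ A¹ is a ℤ₂-graded algebra with A¹ ≠ 0 over a field of characteristic zero. Then the Grassmann envelope G_m(A) is not a semiprime algebra. -/

import Mathlib

open scoped TensorProduct

noncomputable section

variable (F : Type*) [Field F]

/-- Grassmann (exterior) algebra on generators indexed by `ι`. -/
abbrev Grass (ι : Type*) := ExteriorAlgebra F (ι →₀ F)

/-- The parity (ℤ₂) grading of the Grassmann algebra. -/
def grassPart (ι : Type*) (i : ZMod 2) : Submodule F (Grass F ι) :=
  CliffordAlgebra.evenOdd (0 : QuadraticForm F (ι →₀ F)) i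

/-- The augmentation ideal of the Grassmann algebra: elements with zero constant term. -/
def grassStar (ι : Type*) : Submodule F (Grass F ι) :=
  LinearMap.ker (ExteriorAlgebra.algebraMapInv (M := ι →₀ F)).toLinearMap

/-- The image of `p ⊗ q` inside `A ⊗[F] B`. -/
def tensSub {A B : Type*} [Ring A] [Ring B] [Algebra F A] [Algebra F B]
    (p : Submodule F A) (q : Submodule F B) : Submodule F (A ⊗[F] B) :=
  LinearMap.range (TensorProduct.map p.subtype q.subtype)

/-- The Grassmann envelope `A⁰ ⊗ G⁰ ⊕ A¹ ⊗ G¹` of a ℤ₂-graded algebra. -/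
def grassEnv (A : Type*) [Ring A] [Algebra F A] (𝒜 : ZMod 2 → Submodule F A)
    (ι : Type*) : Submodule F (A ⊗[F] Grass F ι) :=
  tensSub F (𝒜 0) (grassPart F ι 0) ⊔ tensSub F (𝒜 1) (grassPart F ι 1)

/-- The Grassmann envelope without constant terms `(G*)⁰ ⊗ A⁰ ⊕ (G*)¹ ⊗ A¹`. -/
def grassEnvStar (A : Type*) [Ring A] [Algebra F A] (𝒜 : ZMod 2 → Submodule F A)
    (ι : Type*) : Submodule F (A ⊗[F] Grass F ι) :=
  tensSub F (𝒜 0) (grassStar F ι ⊓ grassPart F ι 0) ⊔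
    tensSub F (𝒜 1) (grassStar F ι ⊓ grassPart F ι 1)


namespace MyAux

open ExteriorAlgebra

variable {M : Type*} [AddCommGroup M] [Module F M]

/-- anticommutation of ι v with a product of ι's -/
lemma iota_mul_list_prod (v : M) (l : List M) :
    ι F v * (l.map (ι F)).prod = ((-1 : F) ^ l.length) • ((l.map (ι F)).prod * ι F v) := by
  induction l with
  | nil => simp
  | cons w t ih =>
    have hswap : ι F v * ι F w = -(ι F w * ι F v) :=
      eq_neg_of_add_eq_zero_left (ι_add_mul_swap v w)
    simp only [List.map_cons, List.prod_cons, List.length_cons]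
    rw [← mul_assoc, hswap, neg_mul, mul_assoc, ih, pow_succ]
    rw [mul_smul_comm, mul_neg_one, neg_smul, mul_assoc]

lemma listprod_mem_pow (l : List M) :
    (l.map (ι F)).prod ∈ (LinearMap.range (ι F)) ^ l.length := by
  induction l with
  | nil =>
    simp only [List.map_nil, List.prod_nil, List.length_nil, pow_zero]
    exact Submodule.one_le.mp (le_refl (1 : Submodule F (ExteriorAlgebra F M)))
  | cons w t ih =>
    simp only [List.map_cons, List.prod_cons, List.length_cons]
    rw [pow_succ']
    exact Submodule.mul_mem_mul (LinearMap.mem_range_self _ _) ih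


variable (m : ℕ)

def gOm : Grass F (Fin m) := ExteriorAlgebra.ιMulti F m (fun i => Finsupp.single i (1 : F))

lemma gOm_eq : gOm F m = ((List.ofFn fun i : Fin m => Finsupp.single i (1 : F)).map (ι F)).prod := by
  rw [gOm, ιMulti_apply, List.map_ofFn]
  rfl

lemma iota_mul_gOm (v : Fin m →₀ F) : ι F v * gOm F m = 0 := by
  induction v using Finsupp.induction_linear with
  | zero => simp
  | add f g hf hg => rw [map_add, add_mul, hf, hg, add_zero]
  | single a b =>
    have h1 : Finsupp.single a b = b • Finsupp.single a (1 : F) := by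
      rw [Finsupp.smul_single, smul_eq_mul, mul_one]
    rw [h1, map_smul, smul_mul_assoc, gOm, ιMulti_apply,
      ι_mul_prod_list (fun i : Fin m => Finsupp.single i (1 : F)) a, smul_zero]

lemma gOm_mul_iota (v : Fin m →₀ F) : gOm F m * ι F v = 0 := by
  have h := iota_mul_list_prod F v (List.ofFn fun i : Fin m => Finsupp.single i (1 : F))
  rw [← gOm_eq, iota_mul_gOm] at h
  have h2 := h.symm
  rcases smul_eq_zero.mp h2 with h3 | h3
  · exact absurd h3 (pow_ne_zero _ (neg_ne_zero.mpr one_ne_zero))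
  · exact h3

lemma algebraMapInv_iota (v : Fin m →₀ F) :
    ExteriorAlgebra.algebraMapInv (ι F v) = 0 := by
  simp [ExteriorAlgebra.algebraMapInv, ExteriorAlgebra.lift_ι_apply]

lemma mul_gOm_eq (g : Grass F (Fin m)) :
    g * gOm F m = ExteriorAlgebra.algebraMapInv g • gOm F m ∧
      gOm F m * g = ExteriorAlgebra.algebraMapInv g • gOm F m := by
  induction g using ExteriorAlgebra.induction with
  | algebraMap r =>
    rw [ExteriorAlgebra.algebraMap_leftInverse]
    exact ⟨(Algebra.smul_def r (gOm F m)).symm, by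
      rw [← Algebra.commutes r (gOm F m)]; exact (Algebra.smul_def r (gOm F m)).symm⟩
  | ι v => rw [iota_mul_gOm, gOm_mul_iota, algebraMapInv_iota, zero_smul]; exact ⟨rfl, rfl⟩
  | mul a b ha hb =>
    constructor
    · rw [mul_assoc, hb.1, mul_smul_comm, ha.1, smul_smul, map_mul, mul_comm]
    · rw [← mul_assoc, ha.2, smul_mul_assoc, hb.2, smul_smul, map_mul]
  | add a b ha hb =>
    constructor
    · rw [add_mul, ha.1, hb.1, map_add, add_smul]
    · rw [mul_add, ha.2, hb.2, map_add, add_smul]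

lemma gOm_mem_part : gOm F m ∈ grassPart F (Fin m) ((m : ZMod 2)) := by
  rw [grassPart]
  apply Submodule.mem_iSup_of_mem (⟨m, rfl⟩ : {n : ℕ // (n : ZMod 2) = (m : ZMod 2)})
  have h := listprod_mem_pow F (List.ofFn fun i : Fin m => Finsupp.single i (1 : F))
  rw [← gOm_eq, List.length_ofFn] at h
  exact h

lemma part_one_le_star (ι' : Type*) : grassPart F ι' 1 ≤ grassStar F ι' := by
  rw [grassPart]
  apply iSup_le
  rintro ⟨n, hn⟩
  have hn' : n ≠ 0 := by rintro rfl; simp at hn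
  obtain ⟨k, rfl⟩ := Nat.exists_eq_succ_of_ne_zero hn'
  rw [pow_succ]
  refine Submodule.mul_le.mpr ?_
  rintro x hx y ⟨v, rfl⟩
  simp only [grassStar, LinearMap.mem_ker, AlgHom.toLinearMap_apply, map_mul]
  have h0 : ExteriorAlgebra.algebraMapInv (ExteriorAlgebra.ι F v) = 0 := by
    simp [ExteriorAlgebra.algebraMapInv, ExteriorAlgebra.lift_ι_apply]
  rw [show (CliffordAlgebra.ι (0 : QuadraticForm F (ι' →₀ F))) v = ExteriorAlgebra.ι F v from rfl,
    h0, mul_zero]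

lemma algebraMapInv_gOm (hm : 1 ≤ m) : ExteriorAlgebra.algebraMapInv (gOm F m) = 0 := by
  obtain ⟨k, rfl⟩ : ∃ k, m = k + 1 := ⟨m - 1, by omega⟩
  rw [gOm_eq, List.ofFn_succ, List.map_cons, List.prod_cons, map_mul, algebraMapInv_iota, zero_mul]

def detFam (i : ℕ) : (Fin m →₀ F) [⋀^Fin i]→ₗ[F] F :=
  if h : i = m then h.symm ▸ (Finsupp.basisSingleOne (R := F) (ι := Fin m)).det else 0

lemma lift_detFam_gOm : ExteriorAlgebra.liftAlternating (detFam F m) (gOm F m) = 1 := by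
  rw [gOm, ExteriorAlgebra.liftAlternating_apply_ιMulti]
  have h2 : detFam F m m = (Finsupp.basisSingleOne (R := F) (ι := Fin m)).det := by
    simp only [detFam, dif_pos]
  rw [h2]
  have h3 : (fun i : Fin m => Finsupp.single i (1 : F)) =
      ⇑(Finsupp.basisSingleOne (R := F) (ι := Fin m)) :=
    (Finsupp.coe_basisSingleOne (R := F) (ι := Fin m)).symm
  rw [h3, Module.Basis.det_self]

section Tens
variable {A B : Type*} [Ring A] [Ring B] [Algebra F A] [Algebra F B]

lemma tmul_mem_tensSub {p : Submodule F A} {q : Submodule F B} {a : A} {b : B}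
    (ha : a ∈ p) (hb : b ∈ q) : a ⊗ₜ[F] b ∈ tensSub F p q :=
  ⟨(⟨a, ha⟩ : p) ⊗ₜ[F] (⟨b, hb⟩ : q), TensorProduct.map_tmul _ _ _ _⟩

lemma tensSub_le {p : Submodule F A} {q : Submodule F B} {r : Submodule F (A ⊗[F] B)}
    (h : ∀ a ∈ p, ∀ b ∈ q, a ⊗ₜ[F] b ∈ r) : tensSub F p q ≤ r := by
  rw [tensSub, TensorProduct.range_map_eq_span_tmul, Submodule.span_le]
  rintro _ ⟨a, b, rfl⟩
  exact h a a.2 b b.2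

lemma tensSub_mono {p p' : Submodule F A} {q q' : Submodule F B} (hp : p ≤ p') (hq : q ≤ q') :
    tensSub F p q ≤ tensSub F p' q' :=
  tensSub_le F fun a ha b hb => tmul_mem_tensSub F (hp ha) (hq hb)

lemma tensSub_mul_tensSub (p p' : Submodule F A) (q q' : Submodule F B) :
    tensSub F p q * tensSub F p' q' ≤ tensSub F (p * p') (q * q') := by
  rw [tensSub, tensSub, TensorProduct.range_map_eq_span_tmul,
    TensorProduct.range_map_eq_span_tmul, Submodule.span_mul_span, Submodule.span_le]
  rintro _ ⟨_, ⟨a, b, rfl⟩, _, ⟨a', b', rfl⟩, rfl⟩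
  show ((a : A) ⊗ₜ[F] (b : B)) * ((a' : A) ⊗ₜ[F] (b' : B)) ∈ tensSub F (p * p') (q * q')
  rw [Algebra.TensorProduct.tmul_mul_tmul]
  exact tmul_mem_tensSub F (Submodule.mul_mem_mul a.2 a'.2) (Submodule.mul_mem_mul b.2 b'.2)

lemma tensSub_bot_right (p : Submodule F A) : tensSub F p (⊥ : Submodule F B) = ⊥ := by
  refine le_bot_iff.mp (tensSub_le F ?_)
  rintro a _ b hb
  rw [Submodule.mem_bot] at hb
  rw [hb, TensorProduct.tmul_zero]
  exact Submodule.zero_mem ⊥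

end Tens

end MyAux

set_option maxHeartbeats 2000000 in
/-- if `m ≥ 1` and `A¹ ≠ 0`, the Grassmann envelope `G_m(A)` is not
semiprime: it has a nonzero ideal whose square is zero. -/
theorem grassEnv_not_semiprime
    (A : Type*) [Ring A] [Algebra F A] [CharZero F]
    (𝒜 : ZMod 2 → Submodule F A) [GradedAlgebra 𝒜]
    (m : ℕ) (hm : 1 ≤ m) (hA1 : 𝒜 1 ≠ ⊥) :
    ∃ I : Submodule F (A ⊗[F] Grass F (Fin m)),
      I ≤ grassEnv F A 𝒜 (Fin m) ∧ I ≠ ⊥ ∧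
      grassEnv F A 𝒜 (Fin m) * I ≤ I ∧ I * grassEnv F A 𝒜 (Fin m) ≤ I ∧
      I * I = ⊥ := by
  classical
  set p : ZMod 2 := (m : ZMod 2) with hp
  set ω : Grass F (Fin m) := MyAux.gOm F m with hωdef
  set I : Submodule F (A ⊗[F] Grass F (Fin m)) :=
    tensSub F (𝒜 p) (Submodule.span F {ω}) with hI
  have hzmod : ∀ x : ZMod 2, x = 0 ∨ x = 1 := by decide
  have hspan_le : Submodule.span F {ω} ≤ grassPart F (Fin m) p :=
    Submodule.span_le.mpr (Set.singleton_subset_iff.mpr (MyAux.gOm_mem_part F m))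
  -- graded multiplication on the A side
  have hAmul : ∀ i j : ZMod 2, 𝒜 i * 𝒜 j ≤ 𝒜 (i + j) := fun i j =>
    Submodule.mul_le.mpr fun x hx y hy => SetLike.mul_mem_graded hx hy
  -- multiplication facts on the Grassmann side
  have h0l : grassPart F (Fin m) 0 * Submodule.span F {ω} ≤ Submodule.span F {ω} := by
    refine Submodule.mul_le.mpr fun g _ w hw => ?_
    obtain ⟨c, rfl⟩ := Submodule.mem_span_singleton.mp hw
    rw [mul_smul_comm, (MyAux.mul_gOm_eq F m g).1, smul_smul]
    exact Submodule.smul_mem _ _ (Submodule.mem_span_singleton_self ω)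
  have h0r : Submodule.span F {ω} * grassPart F (Fin m) 0 ≤ Submodule.span F {ω} := by
    refine Submodule.mul_le.mpr fun w hw g _ => ?_
    obtain ⟨c, rfl⟩ := Submodule.mem_span_singleton.mp hw
    rw [smul_mul_assoc, (MyAux.mul_gOm_eq F m g).2, smul_smul]
    exact Submodule.smul_mem _ _ (Submodule.mem_span_singleton_self ω)
  have h1l : grassPart F (Fin m) 1 * Submodule.span F {ω} ≤ ⊥ := by
    refine Submodule.mul_le.mpr fun g hg w hw => ?_
    obtain ⟨c, rfl⟩ := Submodule.mem_span_singleton.mp hw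
    have hginv : ExteriorAlgebra.algebraMapInv g = 0 :=
      LinearMap.mem_ker.mp (MyAux.part_one_le_star F (Fin m) hg)
    rw [mul_smul_comm, (MyAux.mul_gOm_eq F m g).1, hginv, zero_smul, smul_zero]
    exact Submodule.zero_mem ⊥
  have h1r : Submodule.span F {ω} * grassPart F (Fin m) 1 ≤ ⊥ := by
    refine Submodule.mul_le.mpr fun w hw g hg => ?_
    obtain ⟨c, rfl⟩ := Submodule.mem_span_singleton.mp hw
    have hginv : ExteriorAlgebra.algebraMapInv g = 0 :=
      LinearMap.mem_ker.mp (MyAux.part_one_le_star F (Fin m) hg)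
    rw [smul_mul_assoc, (MyAux.mul_gOm_eq F m g).2, hginv, zero_smul, smul_zero]
    exact Submodule.zero_mem ⊥
  have hωω : Submodule.span F {ω} * Submodule.span F {ω} ≤ ⊥ := by
    refine Submodule.mul_le.mpr fun w hw w' hw' => ?_
    obtain ⟨c, rfl⟩ := Submodule.mem_span_singleton.mp hw
    obtain ⟨c', rfl⟩ := Submodule.mem_span_singleton.mp hw'
    rw [smul_mul_assoc, mul_smul_comm, (MyAux.mul_gOm_eq F m ω).1,
      MyAux.algebraMapInv_gOm F m hm, zero_smul, smul_zero, smul_zero]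
    exact Submodule.zero_mem ⊥
  -- I is inside the envelope
  have hIenv : I ≤ grassEnv F A 𝒜 (Fin m) := by
    have h1 : I ≤ tensSub F (𝒜 p) (grassPart F (Fin m) p) :=
      MyAux.tensSub_mono F le_rfl hspan_le
    refine le_trans h1 ?_
    rcases hzmod p with h | h <;> rw [h, grassEnv]
    · exact le_sup_left
    · exact le_sup_right
  -- I is nonzero
  obtain ⟨x, hx, hxne⟩ := (Submodule.ne_bot_iff _).mp hA1
  haveI : Nontrivial A := nontrivial_of_ne x 0 hxne
  obtain ⟨a, ha, hane⟩ : ∃ a, a ∈ 𝒜 p ∧ a ≠ 0 := by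
    rcases hzmod p with h | h
    · exact ⟨1, h ▸ SetLike.one_mem_graded 𝒜, one_ne_zero⟩
    · exact ⟨x, h ▸ hx, hxne⟩
  obtain ⟨φ, hφ⟩ : ∃ φ : Module.Dual F A, φ a ≠ 0 := by
    by_contra hc
    push_neg at hc
    exact hane ((Module.forall_dual_apply_eq_zero_iff F a).mp hc)
  have htne : a ⊗ₜ[F] ω ≠ 0 := by
    intro h0
    set L := TensorProduct.map φ (ExteriorAlgebra.liftAlternating (MyAux.detFam F m)) with hL
    have h2 : L (a ⊗ₜ[F] ω) = φ a ⊗ₜ[F] (1 : F) := by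
      rw [hL, TensorProduct.map_tmul, hωdef, MyAux.lift_detFam_gOm]
    rw [h0, map_zero] at h2
    have h3 := congrArg (TensorProduct.lid F F) h2
    rw [map_zero, TensorProduct.lid_tmul, smul_eq_mul, mul_one] at h3
    exact hφ h3.symm
  have hIne : I ≠ ⊥ := by
    intro hbot
    have hmem : a ⊗ₜ[F] ω ∈ I :=
      MyAux.tmul_mem_tensSub F ha (Submodule.mem_span_singleton_self ω)
    rw [hbot, Submodule.mem_bot] at hmem
    exact htne hmem
  -- left ideal property
  have hleft : grassEnv F A 𝒜 (Fin m) * I ≤ I := by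
    rw [grassEnv, Submodule.sup_mul]
    refine sup_le ?_ ?_
    · refine le_trans (MyAux.tensSub_mul_tensSub F _ _ _ _) ?_
      refine MyAux.tensSub_mono F (le_trans (hAmul 0 p) (le_of_eq (by rw [zero_add]))) h0l
    · refine le_trans (MyAux.tensSub_mul_tensSub F _ _ _ _) ?_
      refine le_trans (MyAux.tensSub_mono F le_top h1l) ?_
      rw [MyAux.tensSub_bot_right]
      exact bot_le
  have hright : I * grassEnv F A 𝒜 (Fin m) ≤ I := by
    rw [grassEnv, Submodule.mul_sup]
    refine sup_le ?_ ?_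
    · refine le_trans (MyAux.tensSub_mul_tensSub F _ _ _ _) ?_
      refine MyAux.tensSub_mono F (le_trans (hAmul p 0) (le_of_eq (by rw [add_zero]))) h0r
    · refine le_trans (MyAux.tensSub_mul_tensSub F _ _ _ _) ?_
      refine le_trans (MyAux.tensSub_mono F le_top h1r) ?_
      rw [MyAux.tensSub_bot_right]
      exact bot_le
  have hsq : I * I = ⊥ := by
    refine le_bot_iff.mp ?_
    refine le_trans (MyAux.tensSub_mul_tensSub F _ _ _ _) ?_
    refine le_trans (MyAux.tensSub_mono F le_top hωω) ?_
    rw [MyAux.tensSub_bot_right]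
  exact ⟨I, hIenv, hIne, hleft, hright, hsq⟩
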